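/- Let P be a lattice. A cospan [a,a'] ⊇ [b,b'] ⊆ [c,c'] in the interval poset [P] is atomic if and only if a ∨ c ≤ a' ∧ c' and [b,b'] = [a ∨ c, a' ∧ c']. -/
import Mathlib


/-- An interval in a poset `P` is a pair `(a, a')` with `a ≤ a'`. -/
def PIvl (P : Type*) [PartialOrder P] : Type _ := {p : P × P // p.1 ≤ p.2}

/-- Intervals are partially ordered by the precision relation:
`[a,a'] ≤ [b,b']` iff `[a,a'] ⊇ [b,b']` iff `a ≤ b` and `b' ≤ a'`. -/
instance {P : Type*} [PartialOrder P] : PartialOrder (PIvl P) where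
  le x y := x.1.1 ≤ y.1.1 ∧ y.1.2 ≤ x.1.2
  le_refl x := ⟨le_refl _, le_refl _⟩
  le_trans x y z h h' := ⟨h.1.trans h'.1, h'.2.trans h.2⟩
  le_antisymm x y h h' :=
    Subtype.ext (Prod.ext (le_antisymm h.1 h'.1) (le_antisymm h'.2 h.2))

/-- In a poset (a thin category), a cospan `x ⊇ b ⊆ y` is atomic iff every `z` with
`x ⊇ z`, `y ⊇ z` and `z ⊇ b` equals `b`. -/
def IsAtomicCospan {α : Type*} [PartialOrder α] (x b y : α) : Prop :=
  x ≤ b ∧ y ≤ b ∧ ∀ z, x ≤ z → y ≤ z → z ≤ b → z = b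

/-- In a lattice `P`, a cospan `[a,a'] ⊇ [b,b'] ⊆ [c,c']` in the interval poset is atomic
iff `a ⊔ c ≤ a' ⊓ c'` and `[b,b'] = [a ⊔ c, a' ⊓ c']`. -/
theorem interval_atomicCospan_iff {P : Type*} [Lattice P]
    (x b y : PIvl P) (hx : x ≤ b) (hy : y ≤ b) :
    IsAtomicCospan x b y ↔
      x.1.1 ⊔ y.1.1 ≤ x.1.2 ⊓ y.1.2 ∧ b.1 = (x.1.1 ⊔ y.1.1, x.1.2 ⊓ y.1.2) := by
  obtain ⟨hx1, hx2⟩ := hx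
  obtain ⟨hy1, hy2⟩ := hy
  have hle : x.1.1 ⊔ y.1.1 ≤ x.1.2 ⊓ y.1.2 :=
    le_inf (sup_le (hx1.trans (b.2.trans hx2)) (hy1.trans (b.2.trans hx2)))
           (sup_le (hx1.trans (b.2.trans hy2)) (hy1.trans (b.2.trans hy2)))
  constructor
  · rintro ⟨-, -, hmax⟩
    refine ⟨hle, ?_⟩
    have := hmax ⟨(x.1.1 ⊔ y.1.1, x.1.2 ⊓ y.1.2), hle⟩
      ⟨le_sup_left, inf_le_left⟩ ⟨le_sup_right, inf_le_right⟩
      ⟨sup_le hx1 hy1, le_inf hx2 hy2⟩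
    exact (congrArg Subtype.val this).symm
  · rintro ⟨-, hb⟩
    refine ⟨⟨hx1, hx2⟩, ⟨hy1, hy2⟩, fun z hxz hyz hzb => ?_⟩
    apply le_antisymm hzb
    constructor
    · rw [show b.1.1 = x.1.1 ⊔ y.1.1 from congrArg Prod.fst hb]
      exact sup_le hxz.1 hyz.1
    · rw [show b.1.2 = x.1.2 ⊓ y.1.2 from congrArg Prod.snd hb]
      exact le_inf hxz.2 hyz.2
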